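/- Let K be a field, (A,Φ) a linear extended associative semigroup over K, and a,b ∈ A. The following are equivalent: (i) for every Φ-associative algebra (V,*) over K, the bilinear product m on V defined by m(x,y) = x *_a y + y *_b x is associative; (ii) either b = 0 and Φ(a ⊗ a) = a ⊗ a, or a = 0 and Φ(b ⊗ b) = b ⊗ b. -/

import Mathlib

open TensorProduct

section Defs

variable (K : Type) [Field K]
variable (A : Type) [AddCommGroup A] [Module K A]

/-- The "right reassociated" version of `Φ ⊗ Id` acting on `A ⊗ (A ⊗ A)`. -/
noncomputable def phiIdMap (Φ : A ⊗[K] A →ₗ[K] A ⊗[K] A) :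
    A ⊗[K] (A ⊗[K] A) →ₗ[K] A ⊗[K] (A ⊗[K] A) :=
  (TensorProduct.assoc K A A A).toLinearMap ∘ₗ (LinearMap.rTensor A Φ) ∘ₗ
    (TensorProduct.assoc K A A A).symm.toLinearMap

/-- `(A, Φ)` is a linear extended associative semigroup (ℓEAS):
`(Id ⊗ Φ) ∘ (Φ ⊗ Id) ∘ (Id ⊗ Φ) = (Φ ⊗ Id) ∘ (Id ⊗ τ) ∘ (Φ ⊗ Id)` on `A^{⊗3}`. -/
def IsLEAS (Φ : A ⊗[K] A →ₗ[K] A ⊗[K] A) : Prop :=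
  (LinearMap.lTensor A Φ) ∘ₗ phiIdMap K A Φ ∘ₗ (LinearMap.lTensor A Φ)
    = phiIdMap K A Φ ∘ₗ (LinearMap.lTensor A (TensorProduct.comm K A A).toLinearMap) ∘ₗ
        phiIdMap K A Φ

variable (V : Type) [AddCommGroup V] [Module K V]

/-- Evaluation `a ⊗ (x ⊗ y) ↦ x *_a y` of a family of products `st`. -/
noncomputable def evalSt (st : A →ₗ[K] V →ₗ[K] V →ₗ[K] V) :
    A ⊗[K] (V ⊗[K] V) →ₗ[K] V :=
  TensorProduct.lift ((TensorProduct.lift.equiv (RingHom.id K) V V V).toLinearMap ∘ₗ st)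

/-- The Sweedler-type trilinear evaluation
`(c ⊗ d) ⊗ ((x ⊗ y) ⊗ z) ↦ (x *_d y) *_c z`. -/
noncomputable def rightTri (st : A →ₗ[K] V →ₗ[K] V →ₗ[K] V) :
    (A ⊗[K] A) ⊗[K] ((V ⊗[K] V) ⊗[K] V) →ₗ[K] V :=
  evalSt K A V st
    ∘ₗ (TensorProduct.leftComm K V A V).toLinearMap
    ∘ₗ (TensorProduct.map (evalSt K A V st) LinearMap.id)
    ∘ₗ (TensorProduct.tensorTensorTensorComm K A A (V ⊗[K] V) V).toLinearMap
    ∘ₗ (LinearMap.rTensor ((V ⊗[K] V) ⊗[K] V) (TensorProduct.comm K A A).toLinearMap)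

/-- `(V, st)` is a `Φ`-associative algebra:
`x *_a (y *_b z) = Σ (x *_{d_i} y) *_{c_i} z` where `Φ(a ⊗ b) = Σ c_i ⊗ d_i`. -/
def IsPhiAssoc (Φ : A ⊗[K] A →ₗ[K] A ⊗[K] A)
    (st : A →ₗ[K] V →ₗ[K] V →ₗ[K] V) : Prop :=
  ∀ (a b : A) (x y z : V),
    st a x (st b y z) = rightTri K A V st ((Φ (a ⊗ₜ b)) ⊗ₜ ((x ⊗ₜ y) ⊗ₜ z))

/-- The space `T_A(V) = ⊕_{n≥1} A^{⊗(n−1)} ⊗ V^{⊗n}` of `A`-typed words, modelled as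
`V ⊗ T(A ⊗ V)`: the typed word `a₁…a_{n−1}x₁…x_n` is `x₁ ⊗ (a₁⊗x₂)⋯(a_{n−1}⊗x_n)`. -/
abbrev TAlg : Type := V ⊗[K] TensorAlgebra K (A ⊗[K] V)

/-- The inclusion of `V` in `T_A(V)` as typed words of length one. -/
noncomputable def iotaTA : V →ₗ[K] TAlg K A V :=
  (TensorProduct.mk K V (TensorAlgebra K (A ⊗[K] V))).flip 1

/-- The appending operation: `appTA (a ⊗ z) u = u · (a z)`. -/
noncomputable def appTA : (A ⊗[K] V) →ₗ[K] (TAlg K A V →ₗ[K] TAlg K A V) :=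
  (LinearMap.lTensorHom V)
    ∘ₗ (LinearMap.mul K (TensorAlgebra K (A ⊗[K] V))).flip
    ∘ₗ (TensorAlgebra.ι K)

/-- The Sweedler-type map `(c ⊗ d) ⊗ ((u ⊗ v) ⊗ z) ↦ (u *_d v) · (c z)` used in the
recursive definition of the products on `T_A(V)`. -/
noncomputable def recTA (st : A →ₗ[K] TAlg K A V →ₗ[K] TAlg K A V →ₗ[K] TAlg K A V) :
    (A ⊗[K] A) ⊗[K] ((TAlg K A V ⊗[K] TAlg K A V) ⊗[K] V) →ₗ[K] TAlg K A V :=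
  (TensorProduct.lift (appTA K A V).flip)
    ∘ₗ (TensorProduct.map (evalSt K A (TAlg K A V) st) (LinearMap.id (M := A ⊗[K] V)))
    ∘ₗ (TensorProduct.tensorTensorTensorComm K A A (TAlg K A V ⊗[K] TAlg K A V) V).toLinearMap
    ∘ₗ (LinearMap.rTensor ((TAlg K A V ⊗[K] TAlg K A V) ⊗[K] V)
          (TensorProduct.comm K A A).toLinearMap)

/-- `st` satisfies the defining recursion of the products `*_a` of `T_A(V)`:
`u *_a z = u·(a z)` for `z ∈ V`, and `u *_a (v·(b z)) = Σ (u *_{d_i} v)·(c_i z)`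
where `Φ(a ⊗ b) = Σ c_i ⊗ d_i`. -/
def SatisfiesRecTA (Φ : A ⊗[K] A →ₗ[K] A ⊗[K] A)
    (st : A →ₗ[K] TAlg K A V →ₗ[K] TAlg K A V →ₗ[K] TAlg K A V) : Prop :=
  (∀ (a : A) (u : TAlg K A V) (z : V), st a u (iotaTA K A V z) = appTA K A V (a ⊗ₜ z) u) ∧
  (∀ (a b : A) (u v : TAlg K A V) (z : V),
    st a u (appTA K A V (b ⊗ₜ z) v)
      = recTA K A V st ((Φ (a ⊗ₜ b)) ⊗ₜ ((u ⊗ₜ v) ⊗ₜ z)))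

/-- The Sweedler-type map `(x ⊗ y) ⊗ (c ⊗ d) ↦ (x *_d y) ⊗ c` used to define the
associative product `⋆` on `V ⊗ A`. -/
noncomputable def sweedlerMul (st : A →ₗ[K] V →ₗ[K] V →ₗ[K] V) :
    (V ⊗[K] V) ⊗[K] (A ⊗[K] A) →ₗ[K] V ⊗[K] A :=
  (LinearMap.rTensor A
      (evalSt K A V st ∘ₗ (TensorProduct.comm K (V ⊗[K] V) A).toLinearMap))
    ∘ₗ (TensorProduct.assoc K (V ⊗[K] V) A A).symm.toLinearMap
    ∘ₗ (LinearMap.lTensor (V ⊗[K] V) (TensorProduct.comm K A A).toLinearMap)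

end Defs

theorem rightTri_tmul (K : Type) [Field K] (A : Type) [AddCommGroup A] [Module K A]
    (V : Type) [AddCommGroup V] [Module K V]
    (st : A →ₗ[K] V →ₗ[K] V →ₗ[K] V) (c d : A) (x y z : V) :
    rightTri K A V st ((c ⊗ₜ d) ⊗ₜ ((x ⊗ₜ y) ⊗ₜ z)) = st c (st d x y) z := by
  simp [rightTri, evalSt, tensorTensorTensorComm, leftComm]

set_option synthInstance.maxHeartbeats 4000000
set_option maxHeartbeats 1000000
noncomputable section Cex
variable (K : Type) [Field K] (A : Type) [AddCommGroup A] [Module K A]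

abbrev Wv : Type := Fin 3 → K
abbrev W2 : Type := Wv K ⊗[K] (A ⊗[K] Wv K)
abbrev W3 : Type := W2 K A ⊗[K] (A ⊗[K] Wv K)
abbrev Mv : Type := Wv K × W2 K A × W3 K A

instance instW2acg : AddCommGroup (W2 K A) := inferInstance
instance instW2mod : Module K (W2 K A) := inferInstance
instance instW3acg : AddCommGroup (W3 K A) := inferInstance
instance instW3mod : Module K (W3 K A) := inferInstance
instance instMvacg : AddCommGroup (Mv K A) := inferInstance
instance instMvmod : Module K (Mv K A) := inferInstance

def C1 : A ⊗[K] (Wv K ⊗[K] Wv K) →ₗ[K] W2 K A :=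
  (TensorProduct.leftComm K A (Wv K) (Wv K)).toLinearMap

theorem C1_tmul (α : A) (x y : Wv K) : C1 K A (α ⊗ₜ (x ⊗ₜ y)) = x ⊗ₜ (α ⊗ₜ y) := by
  simp [C1, leftComm]

def C2 : A ⊗[K] (W2 K A ⊗[K] Wv K) →ₗ[K] W3 K A :=
  (TensorProduct.leftComm K A (W2 K A) (Wv K)).toLinearMap

theorem C2_tmul (α : A) (x : W2 K A) (y : Wv K) :
    C2 K A (α ⊗ₜ (x ⊗ₜ y)) = x ⊗ₜ (α ⊗ₜ y) := by
  simp [C2, leftComm]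

def Pm : (A ⊗[K] A) ⊗[K] (Wv K ⊗[K] (Wv K ⊗[K] Wv K)) →ₗ[K] W3 K A :=
  (TensorProduct.tensorTensorTensorComm K (Wv K) A (A ⊗[K] Wv K) (Wv K)).toLinearMap
    ∘ₗ LinearMap.rTensor ((A ⊗[K] Wv K) ⊗[K] Wv K) (TensorProduct.comm K A (Wv K)).toLinearMap
    ∘ₗ LinearMap.lTensor (A ⊗[K] Wv K) (TensorProduct.assoc K A (Wv K) (Wv K)).symm.toLinearMap
    ∘ₗ (TensorProduct.tensorTensorTensorComm K A A (Wv K) (Wv K ⊗[K] Wv K)).toLinearMap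

theorem Pm_tmul (c d : A) (x y z : Wv K) :
    Pm K A ((c ⊗ₜ d) ⊗ₜ (x ⊗ₜ (y ⊗ₜ z))) = (x ⊗ₜ (d ⊗ₜ y)) ⊗ₜ (c ⊗ₜ z) := by
  simp [Pm, tensorTensorTensorComm]

def pre : A ⊗[K] (Wv K ⊗[K] W2 K A) →ₗ[K] (A ⊗[K] A) ⊗[K] (Wv K ⊗[K] (Wv K ⊗[K] Wv K)) :=
  (TensorProduct.assoc K A A (Wv K ⊗[K] (Wv K ⊗[K] Wv K))).symm.toLinearMap
    ∘ₗ LinearMap.lTensor A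
      ((TensorProduct.leftComm K (Wv K) A (Wv K ⊗[K] Wv K)).toLinearMap
        ∘ₗ LinearMap.lTensor (Wv K) (TensorProduct.leftComm K (Wv K) A (Wv K)).toLinearMap)

theorem pre_tmul (α β : A) (x y z : Wv K) :
    pre K A (α ⊗ₜ (x ⊗ₜ (y ⊗ₜ (β ⊗ₜ z)))) = (α ⊗ₜ β) ⊗ₜ (x ⊗ₜ (y ⊗ₜ z)) := by
  simp [pre, leftComm]

variable (Φ : A ⊗[K] A →ₗ[K] A ⊗[K] A)

def C3 : A ⊗[K] (Wv K ⊗[K] W2 K A) →ₗ[K] W3 K A :=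
  Pm K A ∘ₗ LinearMap.rTensor (Wv K ⊗[K] (Wv K ⊗[K] Wv K)) Φ ∘ₗ pre K A

theorem C3_C1 (α β : A) (x y z : Wv K) :
    C3 K A Φ (α ⊗ₜ (x ⊗ₜ (C1 K A (β ⊗ₜ (y ⊗ₜ z)))))
      = Pm K A ((Φ (α ⊗ₜ β)) ⊗ₜ (x ⊗ₜ (y ⊗ₜ z))) := by
  rw [C1_tmul]
  simp only [C3, LinearMap.comp_apply, pre_tmul, LinearMap.rTensor_tmul]

def p1 : Mv K A →ₗ[K] Wv K := LinearMap.fst K _ _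
def p2 : Mv K A →ₗ[K] W2 K A := (LinearMap.fst K _ _) ∘ₗ (LinearMap.snd K (Wv K) _)
def i2 : W2 K A →ₗ[K] Mv K A := (LinearMap.inr K (Wv K) _) ∘ₗ (LinearMap.inl K (W2 K A) (W3 K A))
def i3 : W3 K A →ₗ[K] Mv K A := (LinearMap.inr K (Wv K) _) ∘ₗ (LinearMap.inr K (W2 K A) (W3 K A))

def Umap : A ⊗[K] (Mv K A ⊗[K] Mv K A) →ₗ[K] Mv K A :=
  i2 K A ∘ₗ C1 K A ∘ₗ LinearMap.lTensor A (TensorProduct.map (p1 K A) (p1 K A))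
    + i3 K A ∘ₗ C2 K A ∘ₗ LinearMap.lTensor A (TensorProduct.map (p2 K A) (p1 K A))
    + i3 K A ∘ₗ C3 K A Φ ∘ₗ LinearMap.lTensor A (TensorProduct.map (p1 K A) (p2 K A))

def stM : A →ₗ[K] Mv K A →ₗ[K] Mv K A →ₗ[K] Mv K A :=
  (TensorProduct.lcurry (RingHom.id K) (Mv K A) (Mv K A) (Mv K A)).comp (TensorProduct.curry (Umap K A Φ))

theorem stM_apply (α : A) (u v : Mv K A) :
    stM K A Φ α u v
      = (0, C1 K A (α ⊗ₜ (u.1 ⊗ₜ v.1)),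
          C2 K A (α ⊗ₜ (u.2.1 ⊗ₜ v.1)) + C3 K A Φ (α ⊗ₜ (u.1 ⊗ₜ v.2.1))) := by
  show Umap K A Φ (α ⊗ₜ (u ⊗ₜ v)) = _
  simp [Umap, i2, i3, p1, p2, Prod.ext_iff]

theorem rightTri_stM (w : A ⊗[K] A) (x y z : Mv K A) :
    rightTri K A (Mv K A) (stM K A Φ) (w ⊗ₜ ((x ⊗ₜ y) ⊗ₜ z))
      = (0, 0, Pm K A (w ⊗ₜ (x.1 ⊗ₜ (y.1 ⊗ₜ z.1)))) := by
  induction w using TensorProduct.induction_on with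
  | zero => simp [Prod.ext_iff]
  | tmul c d =>
    rw [rightTri_tmul]
    rw [stM_apply, stM_apply]
    simp only [tmul_zero, zero_tmul, map_zero, Pm_tmul, C1_tmul, C2_tmul]
    simp [Prod.ext_iff]
  | add w₁ w₂ h₁ h₂ =>
    simp only [add_tmul, map_add, h₁, h₂]
    simp [Prod.ext_iff]

theorem stM_phiAssoc : IsPhiAssoc K A (Mv K A) Φ (stM K A Φ) := by
  intro a b x y z
  rw [rightTri_stM]
  rw [stM_apply]
  conv_lhs => rw [stM_apply]
  simp only [tmul_zero, zero_tmul, map_zero, C3_C1]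
  simp [Prod.ext_iff]


def muF (h : Wv K →ₗ[K] K) : A ⊗[K] Wv K →ₗ[K] A :=
  (TensorProduct.rid K A).toLinearMap ∘ₗ LinearMap.lTensor A h

def nuF (f g : Wv K →ₗ[K] K) : W2 K A →ₗ[K] A :=
  (TensorProduct.lid K A).toLinearMap ∘ₗ TensorProduct.map f (muF K A g)

def Lam (f g h : Wv K →ₗ[K] K) : W3 K A →ₗ[K] A ⊗[K] A :=
  TensorProduct.map (nuF K A f g) (muF K A h)

theorem Lam_tmul (f g h : Wv K →ₗ[K] K) (u v t : Wv K) (α β : A) :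
    Lam K A f g h ((u ⊗ₜ (α ⊗ₜ v)) ⊗ₜ (β ⊗ₜ t)) = (f u * g v * h t) • (α ⊗ₜ β) := by
  simp [Lam, nuF, muF, smul_tmul, tmul_smul, smul_smul]
  ring_nf

theorem Lam_Pm (f g h : Wv K →ₗ[K] K) (u v t : Wv K) (w : A ⊗[K] A) :
    Lam K A f g h (Pm K A (w ⊗ₜ (u ⊗ₜ (v ⊗ₜ t))))
      = (f u * g v * h t) • ((TensorProduct.comm K A A) w) := by
  induction w using TensorProduct.induction_on with
  | zero => simp
  | tmul c d => rw [Pm_tmul, Lam_tmul]; simp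
  | add w₁ w₂ h₁ h₂ => simp only [add_tmul, map_add, h₁, h₂, smul_add]

end Cex

set_option maxHeartbeats 2000000 in
theorem main_fwd
    (K : Type) [Field K] (A : Type) [AddCommGroup A] [Module K A]
    (Φ : A ⊗[K] A →ₗ[K] A ⊗[K] A) (a b : A)
    (H : ∀ x y z : Mv K A,
      stM K A Φ a (stM K A Φ a x y + stM K A Φ b y x) z
          + stM K A Φ b z (stM K A Φ a x y + stM K A Φ b y x)
        = stM K A Φ a x (stM K A Φ a y z + stM K A Φ b z y)
          + stM K A Φ b (stM K A Φ a y z + stM K A Φ b z y) x) :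
    ((b = 0 ∧ Φ (a ⊗ₜ a) = a ⊗ₜ a) ∨ (a = 0 ∧ Φ (b ⊗ₜ b) = b ⊗ₜ b)) := by
  classical
  set e0 : Wv K := Pi.single 0 1 with he0
  set e1 : Wv K := Pi.single 1 1 with he1
  set e2 : Wv K := Pi.single 2 1 with he2
  have h1 := H (e0, 0, 0) (e1, 0, 0) (e2, 0, 0)
  have E := congrArg (fun t => t.2.2) h1
  simp only [stM_apply, Prod.fst_add, Prod.snd_add, Prod.mk_add_mk, zero_add, add_zero,
    tmul_zero, zero_tmul, map_zero, tmul_add, add_tmul, map_add, C3_C1] at E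
  -- E should now be an equation between sums of explicit tensors in W3
  have E1 := congrArg (Lam K A (LinearMap.proj 0) (LinearMap.proj 1) (LinearMap.proj 2)) E
  have E2 := congrArg (Lam K A (LinearMap.proj 1) (LinearMap.proj 0) (LinearMap.proj 2)) E
  have E3 := congrArg (Lam K A (LinearMap.proj 2) (LinearMap.proj 1) (LinearMap.proj 0)) E
  simp only [map_add, Lam_tmul, Lam_Pm, C1_tmul, C2_tmul, LinearMap.proj_apply, he0, he1, he2,
    Pi.single_apply] at E1 E2 E3
  norm_num [Fin.ext_iff] at E1 E2 E3
  -- E1 : a ⊗ₜ a = comm (Φ (a ⊗ₜ a)); E2 : b ⊗ₜ a = 0; E3 : comm (Φ (b ⊗ₜ b)) = b ⊗ₜ b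
  have ha : Φ (a ⊗ₜ a) = a ⊗ₜ[K] a := by
    have := congrArg (TensorProduct.comm K A A).symm E1
    simpa using this.symm
  have hb : Φ (b ⊗ₜ b) = b ⊗ₜ[K] b := by
    have := congrArg (TensorProduct.comm K A A).symm E3
    simpa using this
  have hz : a = 0 ∨ b = 0 := by
    by_contra hc
    push_neg at hc
    obtain ⟨ha0, hb0⟩ := hc
    have hbd : ¬ ∀ φ : Module.Dual K A, φ b = 0 := by
      simp [Module.forall_dual_apply_eq_zero_iff, hb0]
    have had : ¬ ∀ φ : Module.Dual K A, φ a = 0 := by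
      simp [Module.forall_dual_apply_eq_zero_iff, ha0]
    push_neg at hbd had
    obtain ⟨φ, hφ⟩ := hbd
    obtain ⟨ψ, hψ⟩ := had
    have h2 : (TensorProduct.map φ ψ) (b ⊗ₜ[K] a) = 0 := by rw [E2]; simp
    rw [TensorProduct.map_tmul] at h2
    have h3 := congrArg (TensorProduct.lid K K) h2
    simp only [TensorProduct.lid_tmul, map_zero, smul_eq_mul] at h3
    exact (mul_ne_zero hφ hψ) h3
  rcases hz with hz | hz
  · exact Or.inr ⟨hz, hb⟩
  · exact Or.inl ⟨hz, ha⟩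


/-- Proposition 3.18, associative products. Let `(A, Φ)` be a linear
extended associative semigroup and `a, b ∈ A`. The following are equivalent:
(i) for every `Φ`-associative algebra `(V, *)`, the product `m(x,y) = x *_a y + y *_b x`
is associative;
(ii) either `b = 0` and `Φ(a⊗a) = a⊗a`, or `a = 0` and `Φ(b⊗b) = b⊗b`. -/
theorem associative_products_iff
    (K : Type) [Field K] (A : Type) [AddCommGroup A] [Module K A]
    (Φ : A ⊗[K] A →ₗ[K] A ⊗[K] A) (hΦ : IsLEAS K A Φ) (a b : A) :
    (∀ (V : ModuleCat K) (st : A →ₗ[K] V →ₗ[K] V →ₗ[K] V),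
        IsPhiAssoc K A V Φ st →
        ∀ x y z : V,
          st a (st a x y + st b y x) z + st b z (st a x y + st b y x)
            = st a x (st a y z + st b z y) + st b (st a y z + st b z y) x) ↔
      ((b = 0 ∧ Φ (a ⊗ₜ a) = a ⊗ₜ a) ∨ (a = 0 ∧ Φ (b ⊗ₜ b) = b ⊗ₜ b)) := by
  constructor
  · intro H
    exact main_fwd K A Φ a b
      (fun x y z => H (ModuleCat.of K (Mv K A)) (stM K A Φ) (stM_phiAssoc K A Φ) x y z)
  · rintro (⟨hb0, hA⟩ | ⟨ha0, hB⟩) V st hst x y z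
    · subst hb0
      simp only [map_zero, LinearMap.zero_apply, add_zero]
      rw [hst a a x y z, hA, rightTri_tmul]
    · subst ha0
      simp only [map_zero, LinearMap.zero_apply, add_zero, zero_add]
      rw [hst b b z y x, hB, rightTri_tmul]
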